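/- arXiv:2003.10327 — 5 statements merged into one kernel-verified Lean document; each statement's English description precedes it below -/
import Mathlib

section
/- Let F : ℝⁿ → ℝⁿ be locally Lipschitz, Ω ⊆ ℝⁿ nonempty closed, ρ > 0, and ψ(x) = sup_{y∈Ω} (⟨F(x), x-y⟩ - (ρ/2)‖x-y‖²). Then the regularized gap function ψ is locally Lipschitz on ℝⁿ. -/
open Metric

set_option maxHeartbeats 1000000 in
/-- If `F` is locally Lipschitz, then the regularized gap function `ψ` is locally Lipschitz. -/
theorem stmt3 {n : ℕ} (F : EuclideanSpace ℝ (Fin n) → EuclideanSpace ℝ (Fin n))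
    (hF : LocallyLipschitz F) (Ω : Set (EuclideanSpace ℝ (Fin n))) (hΩne : Ω.Nonempty)
    (hΩcl : IsClosed Ω) (ρ : ℝ) (hρ : 0 < ρ)
    (ψ : EuclideanSpace ℝ (Fin n) → ℝ)
    (hψ : ∀ x, ψ x = sSup ((fun y => (inner ℝ (F x) (x - y) : ℝ) - ρ / 2 * ‖x - y‖ ^ 2) '' Ω)) :
    LocallyLipschitz ψ := by
  obtain ⟨φ, hφ⟩ : ∃ φ : EuclideanSpace ℝ (Fin n) → EuclideanSpace ℝ (Fin n) → ℝ,
      φ = fun x y => (inner ℝ (F x) (x - y) : ℝ) - ρ / 2 * ‖x - y‖ ^ 2 := ⟨_, rfl⟩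
  have hψ' : ∀ x, ψ x = sSup ((fun y => φ x y) '' Ω) := by
    intro x; simp only [hφ]; exact hψ x
  -- boundedness above of the image, for every x
  have hBdd : ∀ x, BddAbove ((fun y => φ x y) '' Ω) := by
    intro x
    refine ⟨‖F x‖ ^ 2 / (2 * ρ), ?_⟩
    rintro z ⟨y, _, rfl⟩
    have h1 : (inner ℝ (F x) (x - y) : ℝ) ≤ ‖F x‖ * ‖x - y‖ := real_inner_le_norm _ _
    have h2 : (0:ℝ) ≤ ‖x - y‖ := norm_nonneg _
    have h3 : (0:ℝ) ≤ ‖F x‖ := norm_nonneg _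
    have key : ‖F x‖ * ‖x - y‖ - ρ / 2 * ‖x - y‖ ^ 2 ≤ ‖F x‖ ^ 2 / (2 * ρ) := by
      rw [le_div_iff₀ (by positivity : (0:ℝ) < 2 * ρ)]
      nlinarith [sq_nonneg (‖F x‖ - ρ * ‖x - y‖)]
    simp only [hφ]
    linarith
  have hne : ∀ x, ((fun y => φ x y) '' Ω).Nonempty := fun x => hΩne.image _
  obtain ⟨y₀, hy₀⟩ := hΩne
  intro x₀
  obtain ⟨L, t, ht, hL⟩ := hF x₀
  obtain ⟨ε₀, hε₀, hball₀⟩ := Metric.nhds_basis_closedBall.mem_iff.1 ht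
  obtain ⟨ε, hεdef⟩ : ∃ ε : ℝ, ε = min ε₀ 1 := ⟨_, rfl⟩
  have hε : 0 < ε := hεdef ▸ lt_min hε₀ one_pos
  have hε1 : ε ≤ 1 := hεdef ▸ min_le_right _ _
  have hball : closedBall x₀ ε ⊆ t := by
    rw [hεdef]
    exact (closedBall_subset_closedBall (min_le_left _ _)).trans hball₀
  -- bound on ‖F x‖ on the closed ball
  obtain ⟨M₀, hM₀⟩ := (isCompact_closedBall x₀ ε).exists_bound_of_continuousOn
    hF.continuous.continuousOn
  obtain ⟨M, hMdef⟩ : ∃ M : ℝ, M = max M₀ 0 := ⟨_, rfl⟩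
  have hM0 : 0 ≤ M := hMdef ▸ le_max_right _ _
  have hM : ∀ x ∈ closedBall x₀ ε, ‖F x‖ ≤ M :=
    fun x hx => (hM₀ x hx).trans (hMdef ▸ le_max_left _ _)
  obtain ⟨a, hadef⟩ : ∃ a : ℝ, a = ‖x₀ - y₀‖ := ⟨_, rfl⟩
  have ha0 : (0:ℝ) ≤ a := hadef ▸ norm_nonneg _
  obtain ⟨C, hCdef⟩ : ∃ C : ℝ, C = M * (a + 1) + ρ / 2 * (a + 1) ^ 2 := ⟨_, rfl⟩
  have hC0 : 0 ≤ C := by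
    rw [hCdef]
    have := mul_nonneg hM0 (by linarith : (0:ℝ) ≤ a + 1)
    nlinarith [sq_nonneg (a + 1)]
  obtain ⟨R, hRdef⟩ : ∃ R : ℝ, R = 2 * (2 * M + C + 1) / ρ + 1 + a := ⟨_, rfl⟩
  have hR1 : 1 + a ≤ R := by
    have h : 0 ≤ 2 * (2 * M + C + 1) / ρ := by positivity
    rw [hRdef]; linarith
  have hRkey : ∀ s : ℝ, R ≤ s → M * s - ρ / 2 * s ^ 2 ≤ -C - 1 := by
    intro s hs
    have h1 : ρ * (R - 1 - a) = 2 * (2 * M + C + 1) := by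
      rw [hRdef]; field_simp; ring
    have hR1' : (1:ℝ) ≤ R := by linarith
    have hs1 : (1:ℝ) ≤ s := le_trans hR1' hs
    have h2 : 2 * (2 * M + C + 1) ≤ ρ * s := by nlinarith
    have h3 : 2 * (2 * M + C + 1) * s ≤ ρ * s * s :=
      mul_le_mul_of_nonneg_right h2 (by linarith)
    nlinarith [mul_nonneg hM0 (by linarith : (0:ℝ) ≤ s - 1),
      mul_nonneg hC0 (by linarith : (0:ℝ) ≤ s - 1)]
  -- distances within the ball
  have hdist : ∀ x ∈ closedBall x₀ ε, ‖x - y₀‖ ≤ a + 1 := by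
    intro x hx
    have h1 : dist x x₀ ≤ ε := mem_closedBall.1 hx
    calc ‖x - y₀‖ = dist x y₀ := (dist_eq_norm _ _).symm
      _ ≤ dist x x₀ + dist x₀ y₀ := dist_triangle _ _ _
      _ ≤ ε + a := by rw [hadef]; exact add_le_add h1 (le_of_eq (dist_eq_norm _ _))
      _ ≤ a + 1 := by linarith
  -- lower bound at y₀
  have hlow : ∀ x ∈ closedBall x₀ ε, -C ≤ φ x y₀ := by
    intro x hx
    have hd : ‖x - y₀‖ ≤ a + 1 := hdist x hx
    have h1 : -(‖F x‖ * ‖x - y₀‖) ≤ (inner ℝ (F x) (x - y₀) : ℝ) := by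
      have h := abs_real_inner_le_norm (F x) (x - y₀)
      have h' := neg_abs_le (inner ℝ (F x) (x - y₀) : ℝ)
      linarith
    have hFx : ‖F x‖ ≤ M := hM x hx
    have h2 : ‖F x‖ * ‖x - y₀‖ ≤ M * (a + 1) :=
      mul_le_mul hFx hd (norm_nonneg _) hM0
    have h3 : ‖x - y₀‖ ^ 2 ≤ (a + 1) ^ 2 := by nlinarith [norm_nonneg (x - y₀)]
    have h4 : ρ / 2 * ‖x - y₀‖ ^ 2 ≤ ρ / 2 * (a + 1) ^ 2 :=
      mul_le_mul_of_nonneg_left h3 (by positivity)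
    simp only [hφ, hCdef]
    linarith
  -- far away points are dominated by y₀
  have hfar : ∀ x ∈ closedBall x₀ ε, ∀ y, ¬ (y ∈ closedBall x₀ (R + 1)) → φ x y ≤ φ x y₀ := by
    intro x hx y hy
    have h1 : R + 1 < dist y x₀ := by
      by_contra h
      exact hy (mem_closedBall.2 (le_of_not_gt h))
    have h2 : R ≤ ‖x - y‖ := by
      have h3 : dist y x₀ ≤ dist y x + dist x x₀ := dist_triangle _ _ _
      have h4 : dist x x₀ ≤ ε := mem_closedBall.1 hx
      have h5 : dist y x = ‖x - y‖ := by rw [dist_comm, dist_eq_norm]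
      linarith
    have hup : φ x y ≤ M * ‖x - y‖ - ρ / 2 * ‖x - y‖ ^ 2 := by
      have h6 : (inner ℝ (F x) (x - y) : ℝ) ≤ ‖F x‖ * ‖x - y‖ := real_inner_le_norm _ _
      have h7 : ‖F x‖ * ‖x - y‖ ≤ M * ‖x - y‖ :=
        mul_le_mul_of_nonneg_right (hM x hx) (norm_nonneg _)
      simp only [hφ]
      linarith
    have hk := hRkey ‖x - y‖ h2
    have hl := hlow x hx
    linarith
  -- Lipschitz bound of φ in x, uniform over y in the big ball
  obtain ⟨D, hDdef⟩ : ∃ D : ℝ, D = R + 2 := ⟨_, rfl⟩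
  obtain ⟨K, hKdef⟩ : ∃ K : ℝ, K = (L : ℝ) * D + M + ρ * D := ⟨_, rfl⟩
  have hD0 : 0 ≤ D := by rw [hDdef]; linarith
  have hK0 : 0 ≤ K := by
    rw [hKdef]
    have h1 : 0 ≤ (L : ℝ) * D := mul_nonneg L.coe_nonneg hD0
    have h2 : 0 ≤ ρ * D := mul_nonneg hρ.le hD0
    linarith
  have hLipφ : ∀ x ∈ closedBall x₀ ε, ∀ x' ∈ closedBall x₀ ε, ∀ y ∈ closedBall x₀ (R + 1),
      φ x y - φ x' y ≤ K * ‖x - x'‖ := by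
    intro x hx x' hx' y hy
    have hxy : ‖x - y‖ ≤ D := by
      have h1 : dist x x₀ ≤ ε := mem_closedBall.1 hx
      have h2 : dist x₀ y ≤ R + 1 := by rw [dist_comm]; exact mem_closedBall.1 hy
      have h3 : dist x y ≤ dist x x₀ + dist x₀ y := dist_triangle _ _ _
      rw [← dist_eq_norm, hDdef]
      linarith
    have hx'y : ‖x' - y‖ ≤ D := by
      have h1 : dist x' x₀ ≤ ε := mem_closedBall.1 hx'
      have h2 : dist x₀ y ≤ R + 1 := by rw [dist_comm]; exact mem_closedBall.1 hy
      have h3 : dist x' y ≤ dist x' x₀ + dist x₀ y := dist_triangle _ _ _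
      rw [← dist_eq_norm, hDdef]
      linarith
    have hFdiff : ‖F x - F x'‖ ≤ (L : ℝ) * ‖x - x'‖ := by
      have := hL.dist_le_mul x (hball hx) x' (hball hx')
      rwa [dist_eq_norm, dist_eq_norm] at this
    have hinner : (inner ℝ (F x) (x - y) : ℝ) - (inner ℝ (F x') (x' - y) : ℝ)
        = (inner ℝ (F x - F x') (x - y) : ℝ) + (inner ℝ (F x') (x - x') : ℝ) := by
      simp only [inner_sub_left, inner_sub_right]
      ring
    have h1 : (inner ℝ (F x - F x') (x - y) : ℝ) ≤ (L : ℝ) * D * ‖x - x'‖ := by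
      have ha := real_inner_le_norm (F x - F x') (x - y)
      have hb : ‖F x - F x'‖ * ‖x - y‖ ≤ ((L : ℝ) * ‖x - x'‖) * D :=
        mul_le_mul hFdiff hxy (norm_nonneg _) (by positivity)
      nlinarith
    have h2 : (inner ℝ (F x') (x - x') : ℝ) ≤ M * ‖x - x'‖ := by
      have ha := real_inner_le_norm (F x') (x - x')
      have hb : ‖F x'‖ * ‖x - x'‖ ≤ M * ‖x - x'‖ :=
        mul_le_mul_of_nonneg_right (hM x' hx') (norm_nonneg _)
      linarith
    have h3' : ‖x' - y‖ - ‖x - y‖ ≤ ‖x - x'‖ := by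
      have h := norm_sub_norm_le (x' - y) (x - y)
      have e : (x' - y) - (x - y) = x' - x := by abel
      rw [e, norm_sub_rev x' x] at h
      linarith
    have h4 : ρ / 2 * ‖x' - y‖ ^ 2 - ρ / 2 * ‖x - y‖ ^ 2 ≤ ρ * D * ‖x - x'‖ := by
      have e1 : (‖x' - y‖ + ‖x - y‖) * (‖x' - y‖ - ‖x - y‖)
          ≤ (‖x' - y‖ + ‖x - y‖) * ‖x - x'‖ :=
        mul_le_mul_of_nonneg_left h3' (by positivity)
      have e2 : (‖x' - y‖ + ‖x - y‖) * ‖x - x'‖ ≤ (2 * D) * ‖x - x'‖ :=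
        mul_le_mul_of_nonneg_right (by linarith) (norm_nonneg _)
      have e3 : ‖x' - y‖ ^ 2 - ‖x - y‖ ^ 2 ≤ 2 * D * ‖x - x'‖ := by nlinarith
      have e4 : ρ / 2 * (‖x' - y‖ ^ 2 - ‖x - y‖ ^ 2) ≤ ρ / 2 * (2 * D * ‖x - x'‖) :=
        mul_le_mul_of_nonneg_left e3 (by positivity)
      nlinarith
    have hKexp : K * ‖x - x'‖ = (L : ℝ) * D * ‖x - x'‖ + M * ‖x - x'‖ + ρ * D * ‖x - x'‖ := by
      rw [hKdef]; ring
    simp only [hφ]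
    linarith
  -- one-sided estimate for ψ
  have hψle : ∀ x ∈ closedBall x₀ ε, ∀ x' ∈ closedBall x₀ ε,
      ψ x ≤ ψ x' + K * ‖x - x'‖ := by
    intro x hx x' hx'
    rw [hψ' x]
    apply csSup_le (hne x)
    rintro z ⟨y, hyΩ, rfl⟩
    show φ x y ≤ ψ x' + K * ‖x - x'‖
    by_cases hyb : y ∈ closedBall x₀ (R + 1)
    · have h1 : φ x y - φ x' y ≤ K * ‖x - x'‖ := hLipφ x hx x' hx' y hyb
      have h2 : φ x' y ≤ ψ x' := by
        rw [hψ' x']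
        exact le_csSup (hBdd x') ⟨y, hyΩ, rfl⟩
      linarith
    · have h1 : φ x y ≤ φ x y₀ := hfar x hx y hyb
      have h2 : φ x y₀ - φ x' y₀ ≤ K * ‖x - x'‖ := by
        apply hLipφ x hx x' hx' y₀
        refine mem_closedBall.2 ?_
        rw [dist_comm, dist_eq_norm, ← hadef]
        linarith
      have h3 : φ x' y₀ ≤ ψ x' := by
        rw [hψ' x']
        exact le_csSup (hBdd x') ⟨y₀, hy₀, rfl⟩
      linarith
  -- conclude
  refine ⟨K.toNNReal, closedBall x₀ ε, closedBall_mem_nhds x₀ hε, ?_⟩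
  rw [lipschitzOnWith_iff_dist_le_mul]
  intro x hx x' hx'
  have h1 := hψle x hx x' hx'
  have h2 := hψle x' hx' x hx
  rw [norm_sub_rev] at h2
  rw [Real.dist_eq, Real.coe_toNNReal K hK0, dist_eq_norm]
  rw [abs_sub_le_iff]
  constructor <;> linarith
end

section
/- Let F : ℝⁿ → ℝⁿ be continuous, Ω ⊆ ℝⁿ nonempty closed convex, ρ > 0, and ψ(x) = sup_{y∈Ω} (⟨F(x), x-y⟩ - (ρ/2)‖x-y‖²). Then for x ∈ Ω, ψ(x) = 0 if and only if x solves the variational inequality, i.e. ⟨F(x), y - x⟩ ≥ 0 for all y ∈ Ω. -/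
/-- For `x ∈ Ω`, `ψ(x) = 0` iff `x` solves the variational inequality
`⟨F(x), y - x⟩ ≥ 0` for all `y ∈ Ω`. -/
theorem stmt5 {n : ℕ} (F : EuclideanSpace ℝ (Fin n) → EuclideanSpace ℝ (Fin n))
    (hF : Continuous F) (Ω : Set (EuclideanSpace ℝ (Fin n))) (hΩne : Ω.Nonempty)
    (hΩcl : IsClosed Ω) (hΩcv : Convex ℝ Ω) (ρ : ℝ) (hρ : 0 < ρ)
    (ψ : EuclideanSpace ℝ (Fin n) → ℝ)
    (hψ : ∀ x, ψ x = sSup ((fun y => (inner ℝ (F x) (x - y) : ℝ) - ρ / 2 * ‖x - y‖ ^ 2) '' Ω)) :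
    ∀ x ∈ Ω, (ψ x = 0 ↔ ∀ y ∈ Ω, 0 ≤ (inner ℝ (F x) (y - x) : ℝ)) := by
  intro x hx
  set f : EuclideanSpace ℝ (Fin n) → ℝ :=
    fun y => (inner ℝ (F x) (x - y) : ℝ) - ρ / 2 * ‖x - y‖ ^ 2 with hf
  have hbdd : BddAbove (f '' Ω) := by
    refine ⟨‖F x‖ ^ 2 / (2 * ρ), ?_⟩
    rintro _ ⟨y, _, rfl⟩
    have h1 : (inner ℝ (F x) (x - y) : ℝ) ≤ ‖F x‖ * ‖x - y‖ := real_inner_le_norm _ _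
    have h2 : (0:ℝ) ≤ ‖x - y‖ := norm_nonneg _
    simp only [hf]
    rw [le_div_iff₀ (by positivity : (0:ℝ) < 2 * ρ)]
    nlinarith [sq_nonneg (ρ * ‖x - y‖ - ‖F x‖)]
  have hzero : (0:ℝ) ∈ f '' Ω := ⟨x, hx, by simp [hf]⟩
  constructor
  · intro hψ0 y hy
    by_contra h
    push_neg at h
    set c : ℝ := (inner ℝ (F x) (y - x) : ℝ) with hc
    set s0 : ℝ := ‖y - x‖ ^ 2 with hs0
    have hs0n : (0:ℝ) ≤ s0 := by positivity
    set t : ℝ := min 1 ((-c) / (ρ * s0 + 1)) with ht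
    have hden : (0:ℝ) < ρ * s0 + 1 := by positivity
    have ht0 : 0 < t := lt_min one_pos (div_pos (by linarith) hden)
    have ht1 : t ≤ 1 := min_le_left _ _
    have hts : t * (ρ * s0 + 1) ≤ -c := by
      rw [← le_div_iff₀ hden]; exact min_le_right _ _
    have hmem : x + t • (y - x) ∈ Ω := by
      have := hΩcv.add_smul_sub_mem hx hy ⟨le_of_lt ht0, ht1⟩
      exact this
    have hle : f (x + t • (y - x)) ≤ 0 := by
      have := le_csSup hbdd (Set.mem_image_of_mem f hmem)
      rw [← hψ x, hψ0] at this
      exact this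
    have hxz : x - (x + t • (y - x)) = -(t • (y - x)) := by abel
    have hval : f (x + t • (y - x)) = -(t * c) - ρ / 2 * (t ^ 2 * s0) := by
      simp only [hf, hxz, inner_neg_right, inner_smul_right, norm_neg, norm_smul,
        Real.norm_eq_abs, mul_pow, sq_abs, hc, hs0]
    rw [hval] at hle
    nlinarith [mul_pos ht0 ht0, mul_nonneg (le_of_lt ht0) hs0n]
  · intro hvi
    rw [hψ x]
    apply le_antisymm
    · apply Real.sSup_le
      · rintro _ ⟨y, hy, rfl⟩
        have h1 : (inner ℝ (F x) (x - y) : ℝ) = -(inner ℝ (F x) (y - x) : ℝ) := by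
          rw [← inner_neg_right]; congr 1; abel
        have h2 := hvi y hy
        have h3 : (0:ℝ) ≤ ρ / 2 * ‖x - y‖ ^ 2 := by positivity
        simp only [hf]
        linarith [h1 ▸ (neg_nonpos_of_nonneg h2 : -(inner ℝ (F x) (y - x) : ℝ) ≤ 0)]
      · rfl
    · exact le_csSup hbdd hzero
end

section
/- Let Ω = {x ∈ ℝⁿ : gᵢ(x) ≤ 0 (i = 1,…,r), hⱼ(x) = 0 (j = 1,…,s)} with gᵢ, hⱼ continuously differentiable, and suppose the Mangasarian–Fromovitz constraint qualification holds on Ω. Suppose {xᵏ} ⊆ Ω converges to x̄ ∈ Ω and vᵏ = Σᵢ μᵢᵏ ∇gᵢ(xᵏ) + Σⱼ κⱼᵏ ∇hⱼ(xᵏ) with μᵢᵏ ≥ 0, μᵢᵏ gᵢ(xᵏ) = 0, and the sequence {vᵏ} is bounded. Then the multiplier sequences {μᵏ} ⊆ ℝʳ and {κᵏ} ⊆ ℝˢ are bounded. -/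
set_option maxHeartbeats 1000000

open Finset in
/-- Under MFCQ, bounded sequences of normal-cone vectors have bounded Lagrange
multipliers. -/
theorem stmt9 {n r s : ℕ}
    (g : Fin r → EuclideanSpace ℝ (Fin n) → ℝ)
    (h : Fin s → EuclideanSpace ℝ (Fin n) → ℝ)
    (hg : ∀ i, ContDiff ℝ 1 (g i)) (hh : ∀ j, ContDiff ℝ 1 (h j))
    (Ω : Set (EuclideanSpace ℝ (Fin n)))
    (hΩ : Ω = {x | (∀ i, g i x ≤ 0) ∧ ∀ j, h j x = 0})
    (mfcq : ∀ x ∈ Ω,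
      LinearIndependent ℝ (fun j => gradient (h j) x) ∧
      ∃ v : EuclideanSpace ℝ (Fin n),
        (∀ i, g i x = 0 → (inner ℝ (gradient (g i) x) v : ℝ) < 0) ∧
        (∀ j, (inner ℝ (gradient (h j) x) v : ℝ) = 0))
    (x : ℕ → EuclideanSpace ℝ (Fin n)) (hxΩ : ∀ k, x k ∈ Ω)
    (xbar : EuclideanSpace ℝ (Fin n)) (hxbar : xbar ∈ Ω)
    (hconv : Filter.Tendsto x Filter.atTop (nhds xbar))
    (μ : ℕ → Fin r → ℝ) (κ : ℕ → Fin s → ℝ)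
    (v : ℕ → EuclideanSpace ℝ (Fin n))
    (hv : ∀ k, v k = ∑ i, μ k i • gradient (g i) (x k)
                     + ∑ j, κ k j • gradient (h j) (x k))
    (hμpos : ∀ k i, 0 ≤ μ k i)
    (hμcomp : ∀ k i, μ k i * g i (x k) = 0)
    (hvbdd : ∃ M : ℝ, ∀ k, ‖v k‖ ≤ M) :
    (∃ M : ℝ, ∀ k i, |μ k i| ≤ M) ∧ (∃ M : ℝ, ∀ k j, |κ k j| ≤ M) := by
  classical
  -- continuity of gradients
  have gradg_cont : ∀ i, Continuous (fun y => gradient (g i) y) := fun i =>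
    (InnerProductSpace.toDual ℝ (EuclideanSpace ℝ (Fin n))).symm.continuous.comp ((hg i).continuous_fderiv one_ne_zero)
  have gradh_cont : ∀ j, Continuous (fun y => gradient (h j) y) := fun j =>
    (InnerProductSpace.toDual ℝ (EuclideanSpace ℝ (Fin n))).symm.continuous.comp ((hh j).continuous_fderiv one_ne_zero)
  set c : ℕ → (Fin r → ℝ) × (Fin s → ℝ) := fun k => (μ k, κ k) with hc
  obtain ⟨Mv, hMv⟩ := hvbdd
  have key : ∃ M : ℝ, ∀ k, ‖c k‖ ≤ M := by
    by_contra hM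
    push_neg at hM
    choose ψ hψ using fun m : ℕ => hM m
    -- ψ tends to atTop
    have hψtop : Filter.Tendsto ψ Filter.atTop Filter.atTop := by
      rw [Filter.tendsto_atTop_atTop]
      intro N
      refine ⟨⌈∑ k ∈ Finset.range N, ‖c k‖⌉₊, fun m hm => ?_⟩
      by_contra hlt
      push_neg at hlt
      have h1 : ‖c (ψ m)‖ ≤ ∑ k ∈ Finset.range N, ‖c k‖ :=
        Finset.single_le_sum (f := fun k => ‖c k‖) (fun k _ => norm_nonneg _)
          (Finset.mem_range.mpr hlt)
      have h2 : (∑ k ∈ Finset.range N, ‖c k‖ : ℝ) ≤ m :=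
        le_trans (Nat.le_ceil _) (by exact_mod_cast hm)
      have := hψ m
      linarith
    have hNpos : ∀ m : ℕ, (0:ℝ) < ‖c (ψ m)‖ := fun m =>
      lt_of_le_of_lt (by exact_mod_cast Nat.zero_le m) (hψ m)
    set u : ℕ → (Fin r → ℝ) × (Fin s → ℝ) := fun m => ‖c (ψ m)‖⁻¹ • c (ψ m) with hu
    have humem : ∀ m, u m ∈ Metric.sphere (0 : (Fin r → ℝ) × (Fin s → ℝ)) 1 := by
      intro m
      rw [mem_sphere_zero_iff_norm, hu]
      simp only [norm_smul, norm_inv, norm_norm]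
      exact inv_mul_cancel₀ (hNpos m).ne'
    obtain ⟨l, hl, θ, hθmono, hθtend⟩ :=
      (isCompact_sphere (0 : (Fin r → ℝ) × (Fin s → ℝ)) 1).tendsto_subseq humem
    -- notation for the subsequence
    set φ : ℕ → ℕ := fun m => ψ (θ m) with hφ
    have hφtop : Filter.Tendsto φ Filter.atTop Filter.atTop :=
      hψtop.comp hθmono.tendsto_atTop
    have hy : Filter.Tendsto (fun m => x (φ m)) Filter.atTop (nhds xbar) :=
      hconv.comp hφtop
    have hNtop : Filter.Tendsto (fun m => ‖c (φ m)‖) Filter.atTop Filter.atTop := by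
      apply Filter.tendsto_atTop_mono (fun m => (hψ (θ m)).le)
      exact tendsto_natCast_atTop_atTop.comp hθmono.tendsto_atTop
    -- scaled v tends to 0
    have hv0 : Filter.Tendsto (fun m => ‖c (φ m)‖⁻¹ • v (φ m)) Filter.atTop (nhds 0) := by
      apply squeeze_zero_norm (a := fun m => ‖c (φ m)‖⁻¹ * Mv)
      · intro m
        rw [norm_smul, norm_inv, norm_norm]
        exact mul_le_mul_of_nonneg_left (hMv _) (inv_nonneg.mpr (norm_nonneg _))
      · have : Filter.Tendsto (fun m => ‖c (φ m)‖⁻¹) Filter.atTop (nhds 0) :=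
          tendsto_inv_atTop_zero.comp hNtop
        simpa using this.mul_const Mv
    -- scaled v equals F (u (θ m)) (x (φ m))
    have hveq : ∀ m, ‖c (φ m)‖⁻¹ • v (φ m)
        = ∑ i, (u (θ m)).1 i • gradient (g i) (x (φ m))
          + ∑ j, (u (θ m)).2 j • gradient (h j) (x (φ m)) := by
      intro m
      rw [hv (φ m), smul_add, Finset.smul_sum, Finset.smul_sum]
      congr 1 <;> refine Finset.sum_congr rfl fun i _ => ?_ <;>
        · rw [smul_smul]
          rfl
    -- the limit of the right-hand side
    have hlimF : Filter.Tendsto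
        (fun m => ∑ i, (u (θ m)).1 i • gradient (g i) (x (φ m))
          + ∑ j, (u (θ m)).2 j • gradient (h j) (x (φ m))) Filter.atTop
        (nhds (∑ i, l.1 i • gradient (g i) xbar + ∑ j, l.2 j • gradient (h j) xbar)) := by
      have hcoord1 : ∀ i, Filter.Tendsto (fun m => (u (θ m)).1 i) Filter.atTop (nhds (l.1 i)) :=
        fun i => (((continuous_apply i).comp continuous_fst).tendsto l).comp hθtend
      have hcoord2 : ∀ j, Filter.Tendsto (fun m => (u (θ m)).2 j) Filter.atTop (nhds (l.2 j)) :=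
        fun j => (((continuous_apply j).comp continuous_snd).tendsto l).comp hθtend
      apply Filter.Tendsto.add
      · exact tendsto_finset_sum _ fun i _ =>
          (hcoord1 i).smul (((gradg_cont i).tendsto xbar).comp hy)
      · exact tendsto_finset_sum _ fun j _ =>
          (hcoord2 j).smul (((gradh_cont j).tendsto xbar).comp hy)
    have hFzero : ∑ i, l.1 i • gradient (g i) xbar + ∑ j, l.2 j • gradient (h j) xbar = 0 := by
      refine tendsto_nhds_unique ?_ hv0
      exact (Filter.Tendsto.congr (fun m => (hveq m).symm) hlimF)
    -- properties of l
    have hl1nonneg : ∀ i, 0 ≤ l.1 i := by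
      intro i
      have hcoord : Filter.Tendsto (fun m => (u (θ m)).1 i) Filter.atTop (nhds (l.1 i)) :=
        (((continuous_apply i).comp continuous_fst).tendsto l).comp hθtend
      refine ge_of_tendsto' hcoord fun m => ?_
      show (0:ℝ) ≤ ‖c (ψ (θ m))‖⁻¹ * μ (ψ (θ m)) i
      exact mul_nonneg (inv_nonneg.mpr (norm_nonneg _)) (hμpos _ _)
    have hl1act : ∀ i, g i xbar < 0 → l.1 i = 0 := by
      intro i hgi
      have hev : ∀ᶠ m in Filter.atTop, g i (x (φ m)) < 0 := by
        have := ((hg i).continuous.tendsto xbar).comp hy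
        exact this (gt_mem_nhds hgi)
      have hev0 : ∀ᶠ m in Filter.atTop, (u (θ m)).1 i = 0 := by
        filter_upwards [hev] with m hm
        have hμ0 : μ (φ m) i = 0 := by
          rcases mul_eq_zero.mp (hμcomp (φ m) i) with h0 | h0
          · exact h0
          · exact absurd h0 hm.ne
        show ‖c (ψ (θ m))‖⁻¹ * μ (ψ (θ m)) i = 0
        rw [show ψ (θ m) = φ m from rfl, hμ0, mul_zero]
      have h1 : Filter.Tendsto (fun m => (u (θ m)).1 i) Filter.atTop (nhds (l.1 i)) :=
        (((continuous_apply i).comp continuous_fst).tendsto l).comp hθtend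
      have h2 : Filter.Tendsto (fun m => (u (θ m)).1 i) Filter.atTop (nhds 0) :=
        Filter.Tendsto.congr' (Filter.EventuallyEq.symm hev0) tendsto_const_nhds
      exact tendsto_nhds_unique h1 h2
    -- MFCQ at xbar
    obtain ⟨hlin, v0, hv0g, hv0h⟩ := mfcq xbar hxbar
    have hxbar' := hΩ ▸ hxbar
    obtain ⟨hgle, _⟩ := hxbar'
    -- inner product with v0
    have hinner : ∑ i, l.1 i * (inner ℝ (gradient (g i) xbar) v0 : ℝ) = 0 := by
      have h0 : (inner ℝ (∑ i, l.1 i • gradient (g i) xbar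
          + ∑ j, l.2 j • gradient (h j) xbar) v0 : ℝ) = 0 := by
        rw [hFzero, inner_zero_left]
      rw [inner_add_left, sum_inner, sum_inner] at h0
      simp only [real_inner_smul_left] at h0
      have : ∑ j, l.2 j * (inner ℝ (gradient (h j) xbar) v0 : ℝ) = 0 :=
        Finset.sum_eq_zero fun j _ => by rw [hv0h j, mul_zero]
      linarith [h0, this]
    have hl1zero : ∀ i, l.1 i = 0 := by
      have hterms : ∀ i ∈ Finset.univ, l.1 i * (inner ℝ (gradient (g i) xbar) v0 : ℝ) ≤ 0 := by
        intro i _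
        rcases lt_or_eq_of_le (hgle i) with hlt | heq
        · rw [hl1act i hlt, zero_mul]
        · exact mul_nonpos_of_nonneg_of_nonpos (hl1nonneg i) (hv0g i heq).le
      have := (Finset.sum_eq_zero_iff_of_nonpos hterms).mp hinner
      intro i
      rcases lt_or_eq_of_le (hgle i) with hlt | heq
      · exact hl1act i hlt
      · have hne : (inner ℝ (gradient (g i) xbar) v0 : ℝ) ≠ 0 := (hv0g i heq).ne
        exact (mul_eq_zero.mp (this i (Finset.mem_univ i))).resolve_right hne
    have hl2zero : ∀ j, l.2 j = 0 := by
      have hsum : ∑ j, l.2 j • gradient (h j) xbar = 0 := by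
        have h1 : ∑ i, l.1 i • gradient (g i) xbar = 0 :=
          Finset.sum_eq_zero fun i _ => by rw [hl1zero i, zero_smul]
        rw [h1, zero_add] at hFzero
        exact hFzero
      exact Fintype.linearIndependent_iff.mp hlin l.2 hsum
    -- contradiction with ‖l‖ = 1
    have hlnorm : ‖l‖ = 1 := mem_sphere_zero_iff_norm.mp hl
    have hl0 : l = 0 := by
      have : l = (l.1, l.2) := rfl
      rw [this, Prod.mk_eq_zero]
      constructor
      · funext i; exact hl1zero i
      · funext j; exact hl2zero j
    rw [hl0, norm_zero] at hlnorm
    exact one_ne_zero hlnorm.symm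
  obtain ⟨M, hMk⟩ := key
  constructor
  · refine ⟨M, fun k i => ?_⟩
    calc |μ k i| = ‖μ k i‖ := rfl
      _ ≤ ‖μ k‖ := norm_le_pi_norm (μ k) i
      _ ≤ ‖c k‖ := norm_fst_le (c k)
      _ ≤ M := hMk k
  · refine ⟨M, fun k j => ?_⟩
    calc |κ k j| = ‖κ k j‖ := rfl
      _ ≤ ‖κ k‖ := norm_le_pi_norm (κ k) j
      _ ≤ ‖c k‖ := norm_snd_le (c k)
      _ ≤ M := hMk k
end

section
/- Let F(x₁,x₂) = (x₂ - 1, x₁x₂ - 1) and ρ > 0, and let ψ(x) = (1/(2ρ))[(x₂-1)² + (x₁x₂-1)²]. Then ψ⁻¹(0) = {(1,1)}, and there do not exist constants c > 0 and α > 0 such that c · dist(x, ψ⁻¹(0)) ≤ ψ(x)^α for all x ∈ ℝ². (Witness: the sequence xᵏ = (k, 1/k), along which ψ(xᵏ) → 1/(2ρ) while dist(xᵏ, ψ⁻¹(0)) → ∞.) -/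
/-- For `ψ(x₁,x₂) = (1/(2ρ))[(x₂-1)² + (x₁x₂-1)²]`, the zero set is the singleton
`{(1,1)}` and no global Hölder error bound `c · dist(x, ψ⁻¹(0)) ≤ ψ(x)^α` can hold. -/
theorem stmt13 (ρ : ℝ) (hρ : 0 < ρ)
    (ψ : EuclideanSpace ℝ (Fin 2) → ℝ)
    (hψ : ∀ x, ψ x = 1 / (2 * ρ) * ((x 1 - 1) ^ 2 + (x 0 * x 1 - 1) ^ 2)) :
    ψ ⁻¹' {0} = {x : EuclideanSpace ℝ (Fin 2) | x 0 = 1 ∧ x 1 = 1} ∧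
    ¬ ∃ c > (0 : ℝ), ∃ α > (0 : ℝ), ∀ x : EuclideanSpace ℝ (Fin 2),
        c * Metric.infDist x (ψ ⁻¹' {0}) ≤ ψ x ^ α := by
  have hzero : ψ ⁻¹' {0} = {x : EuclideanSpace ℝ (Fin 2) | x 0 = 1 ∧ x 1 = 1} := by
    ext x
    simp only [Set.mem_preimage, Set.mem_singleton_iff, Set.mem_setOf_eq, hψ]
    constructor
    · intro h
      have h2 : (x 1 - 1) ^ 2 + (x 0 * x 1 - 1) ^ 2 = 0 := by
        have : (1 : ℝ) / (2 * ρ) ≠ 0 := by positivity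
        exact (mul_eq_zero.mp h).resolve_left this
      have h3 : (x 1 - 1) ^ 2 = 0 ∧ (x 0 * x 1 - 1) ^ 2 = 0 := by
        constructor <;> nlinarith [sq_nonneg (x 1 - 1), sq_nonneg (x 0 * x 1 - 1)]
      have hx1 : x 1 = 1 := by nlinarith [h3.1]
      have hx0 : x 0 = 1 := by
        have := h3.2
        rw [hx1] at this
        nlinarith
      exact ⟨hx0, hx1⟩
    · rintro ⟨h0, h1⟩
      rw [h0, h1]; ring
  refine ⟨hzero, ?_⟩
  rintro ⟨c, hc, α, hα, hbound⟩
  set p : EuclideanSpace ℝ (Fin 2) := WithLp.toLp 2 (fun _ => 1) with hp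
  have hset : ψ ⁻¹' {0} = {p} := by
    rw [hzero]
    ext x
    simp only [Set.mem_setOf_eq, Set.mem_singleton_iff]
    constructor
    · rintro ⟨h0, h1⟩
      ext i
      fin_cases i <;> simpa
    · intro h
      rw [h]; exact ⟨rfl, rfl⟩
  set M : ℝ := (1 / (2 * ρ)) ^ α with hM
  set k : ℝ := max 1 (M / c + 2) with hk
  have hk1 : (1 : ℝ) ≤ k := le_max_left _ _
  have hk0 : k ≠ 0 := by positivity
  set xk : EuclideanSpace ℝ (Fin 2) := WithLp.toLp 2 (fun i => if i = 0 then k else 1 / k) with hxk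
  have hxk0 : xk 0 = k := rfl
  have hxk1 : xk 1 = 1 / k := rfl
  -- value of ψ at xk
  have hψxk : ψ xk = 1 / (2 * ρ) * (1 / k - 1) ^ 2 := by
    rw [hψ, hxk0, hxk1]
    field_simp
    ring
  have hψle : ψ xk ≤ 1 / (2 * ρ) := by
    rw [hψxk]
    have h1 : (1 / k - 1) ^ 2 ≤ 1 := by
      have hik : 0 < 1 / k := by positivity
      have : 1 / k ≤ 1 := by
        rw [div_le_one (by positivity)]; exact hk1
      nlinarith
    have : (0:ℝ) < 1 / (2 * ρ) := by positivity
    nlinarith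
  have hψnn : 0 ≤ ψ xk := by
    rw [hψxk]; positivity
  have hpow : ψ xk ^ α ≤ M := by
    rw [hM]
    exact Real.rpow_le_rpow hψnn hψle (le_of_lt hα)
  -- distance bound
  have hdist : k - 1 ≤ Metric.infDist xk (ψ ⁻¹' {0}) := by
    rw [hset, Metric.infDist_singleton]
    have h1 : dist (xk 0) (p 0) ≤ dist xk p := by
      rw [EuclideanSpace.dist_eq]
      have : dist (xk 0) (p 0) = Real.sqrt (dist (xk 0) (p 0) ^ 2) := by
        rw [Real.sqrt_sq dist_nonneg]
      rw [this]
      apply Real.sqrt_le_sqrt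
      exact Finset.single_le_sum (f := fun i => dist (xk i) (p i) ^ 2)
        (fun i _ => sq_nonneg _) (Finset.mem_univ 0)
    have h2 : dist (xk 0) (p 0) = k - 1 := by
      rw [hxk0]
      show |k - 1| = k - 1
      exact abs_of_nonneg (by linarith)
    linarith [h1, h2 ▸ h1]
  have hmain := hbound xk
  have hck : c * (k - 1) ≤ M := by
    calc c * (k - 1) ≤ c * Metric.infDist xk (ψ ⁻¹' {0}) := by
          exact mul_le_mul_of_nonneg_left hdist (le_of_lt hc)
      _ ≤ ψ xk ^ α := hmain
      _ ≤ M := hpow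
  have hk2 : M / c + 2 ≤ k := le_max_right _ _
  have hMnn : 0 ≤ M := by rw [hM]; positivity
  have : M + c ≤ c * (k - 1) := by
    have : M / c + 1 ≤ k - 1 := by linarith
    have h := mul_le_mul_of_nonneg_left this (le_of_lt hc)
    have : c * (M / c + 1) = M + c := by field_simp
    linarith
  linarith
end

section
/- Let Ω ⊆ ℝⁿ be nonempty closed convex, F : ℝⁿ → ℝⁿ continuous and strongly monotone with modulus σ > 0 (⟨F(x) - F(y), x - y⟩ ≥ σ‖x-y‖² for all x,y), ρ > 0, and ψ the regularized gap function. If x* is the (unique) solution of the VI, then for every x ∈ Ω: ψ(x) ≥ ⟨F(x), x - x*⟩ - (ρ/2)‖x - x*‖² ≥ (σ - ρ/2)‖x - x*‖². In particular, if ρ < 2σ, then ψ(x) ≥ (σ - ρ/2)‖x - x*‖², i.e. a global error bound with exponent 1/2 holds on Ω. -/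
/-- For strongly monotone `F` (modulus `σ`) with `0 < ρ < 2σ` and `x*` the solution
of the VI, the regularized gap function satisfies
`ψ(x) ≥ ⟨F(x), x - x*⟩ - (ρ/2)‖x - x*‖² ≥ (σ - ρ/2)‖x - x*‖²` for all `x ∈ Ω`;
in particular a global error bound with exponent `1/2` holds on `Ω`. -/
theorem stmt17 {n : ℕ} (F : EuclideanSpace ℝ (Fin n) → EuclideanSpace ℝ (Fin n))
    (hF : Continuous F) (Ω : Set (EuclideanSpace ℝ (Fin n))) (hΩne : Ω.Nonempty)
    (hΩcl : IsClosed Ω) (hΩcv : Convex ℝ Ω)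
    (σ : ℝ) (hσ : 0 < σ)
    (hmono : ∀ x y, σ * ‖x - y‖ ^ 2 ≤ (inner ℝ (F x - F y) (x - y) : ℝ))
    (ρ : ℝ) (hρ : 0 < ρ) (hρσ : ρ < 2 * σ)
    (ψ : EuclideanSpace ℝ (Fin n) → ℝ)
    (hψ : ∀ x, ψ x = sSup ((fun y => (inner ℝ (F x) (x - y) : ℝ) - ρ / 2 * ‖x - y‖ ^ 2) '' Ω))
    (xstar : EuclideanSpace ℝ (Fin n)) (hxstar : xstar ∈ Ω)
    (hsol : ∀ y ∈ Ω, 0 ≤ (inner ℝ (F xstar) (y - xstar) : ℝ)) :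
    ∀ x ∈ Ω,
      (inner ℝ (F x) (x - xstar) : ℝ) - ρ / 2 * ‖x - xstar‖ ^ 2 ≤ ψ x ∧
      (σ - ρ / 2) * ‖x - xstar‖ ^ 2 ≤
        (inner ℝ (F x) (x - xstar) : ℝ) - ρ / 2 * ‖x - xstar‖ ^ 2 := by
  intro x hx
  constructor
  · rw [hψ x]
    apply le_csSup
    · -- bounded above by ‖F x‖² / (2ρ)
      refine ⟨‖F x‖ ^ 2 / (2 * ρ), ?_⟩
      rintro _ ⟨y, hy, rfl⟩
      have h1 : (inner ℝ (F x) (x - y) : ℝ) ≤ ‖F x‖ * ‖x - y‖ := real_inner_le_norm _ _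
      have h2 : ‖F x‖ * ‖x - y‖ - ρ / 2 * ‖x - y‖ ^ 2 ≤ ‖F x‖ ^ 2 / (2 * ρ) := by
        rw [le_div_iff₀ (by positivity)]
        nlinarith [sq_nonneg (‖F x‖ - ρ * ‖x - y‖)]
      dsimp only
      linarith
    · exact ⟨xstar, hxstar, rfl⟩
  · have h := hmono x xstar
    rw [inner_sub_left] at h
    have h2 := hsol x hx
    nlinarith
end
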